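/- Let c, t, α, β be real parameters with α, β > 0, and define r(t) = sqrt(α² + t²β²) (so that r(t) = |α·e₁ + tβ·e₂| for orthogonal α·e₁ and tβ·e₂). Suppose |c| ≤ α and |c| ≤ r. Define G(r) = (1 − r·cos r/sin r)·(1 − c²/r²) and F(t) = G(r(t)). Then there exists a universal constant C₀ > 0 such that whenever r(t) ∈ (0, π), d²F/dt²(t) ≥ C₀·β². -/

import Mathlib

set_option maxHeartbeats 1000000
open Real


lemma nonneg_aux {f f' : ℝ → ℝ} (hd : ∀ x, HasDerivAt f (f' x) x) (h0 : f 0 = 0)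
    (h' : ∀ x ∈ Set.Icc (0:ℝ) π, 0 ≤ f' x) : ∀ x ∈ Set.Icc (0:ℝ) π, 0 ≤ f x := by
  intro x hx
  have mono : MonotoneOn f (Set.Icc 0 π) := by
    apply monotoneOn_of_deriv_nonneg (convex_Icc _ _)
    · exact fun y _ => (hd y).continuousAt.continuousWithinAt
    · exact fun y _ => ((hd y).differentiableAt).differentiableWithinAt
    · intro y hy
      rw [(hd y).deriv]
      exact h' y (interior_subset hy)
  have h0m : (0:ℝ) ∈ Set.Icc (0:ℝ) π := ⟨le_refl 0, Real.pi_pos.le⟩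
  calc (0:ℝ) = f 0 := h0.symm
    _ ≤ f x := mono h0m hx hx.1

lemma L1 : ∀ x ∈ Set.Icc (0:ℝ) π, 0 ≤ Real.sin x - x * Real.cos x := by
  apply nonneg_aux (f' := fun x => x * Real.sin x)
  · intro x
    have h := (Real.hasDerivAt_sin x).sub ((hasDerivAt_id x).mul (Real.hasDerivAt_cos x))
    simp only [id_eq] at h
    exact h.congr_deriv (by ring)
  · simp
  · intro x hx
    exact mul_nonneg hx.1 (Real.sin_nonneg_of_nonneg_of_le_pi hx.1 hx.2)

lemma L2 : ∀ x ∈ Set.Icc (0:ℝ) π, 0 ≤ x - Real.sin x * Real.cos x - 2/3*x*(Real.sin x)^2 := by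
  apply nonneg_aux (f' := fun x => 4/3 * Real.sin x * (Real.sin x - x * Real.cos x))
  · intro x
    have h := ((hasDerivAt_id x).sub ((Real.hasDerivAt_sin x).mul (Real.hasDerivAt_cos x))).sub
      ((((hasDerivAt_id x).const_mul (2/3:ℝ)).mul ((Real.hasDerivAt_sin x).pow 2)))
    simp only [id_eq] at h
    refine h.congr_deriv (Eq.symm ?_)
    simp only [Pi.pow_apply]
    push_cast
    linear_combination Real.sin_sq_add_cos_sq x
  · simp
  · intro x hx
    have h1 := Real.sin_nonneg_of_nonneg_of_le_pi hx.1 hx.2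
    nlinarith [mul_nonneg h1 (L1 x hx)]

lemma L3 : ∀ x ∈ Set.Icc (0:ℝ) π, 0 ≤ Real.sin x - x * Real.cos x - x^2/3 * Real.sin x := by
  apply nonneg_aux (f' := fun x => x/3 * (Real.sin x - x * Real.cos x))
  · intro x
    have h := ((Real.hasDerivAt_sin x).sub ((hasDerivAt_id x).mul (Real.hasDerivAt_cos x))).sub
      ((((hasDerivAt_pow 2 x).div_const 3).mul (Real.hasDerivAt_sin x)))
    simp only [id_eq] at h
    refine h.congr_deriv (Eq.symm ?_)
    push_cast; ring
  · simp
  · intro x hx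
    nlinarith [mul_nonneg hx.1 (L1 x hx)]

lemma L4 : ∀ x ∈ Set.Icc (0:ℝ) π, 0 ≤ Real.sin x - x * Real.cos x - 1/3*(Real.sin x)^3 := by
  apply nonneg_aux (f' := fun x => Real.sin x * (x - Real.sin x * Real.cos x))
  · intro x
    have h := ((Real.hasDerivAt_sin x).sub ((hasDerivAt_id x).mul (Real.hasDerivAt_cos x))).sub
      (((Real.hasDerivAt_sin x).pow 3).const_mul (1/3:ℝ))
    simp only [id_eq] at h
    refine h.congr_deriv (Eq.symm ?_)
    push_cast; ring
  · simp
  · intro x hx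
    have hs := Real.sin_nonneg_of_nonneg_of_le_pi hx.1 hx.2
    have hsx : Real.sin x ≤ x := Real.sin_le hx.1
    have hc : Real.sin x * Real.cos x ≤ Real.sin x := by
      nlinarith [Real.cos_le_one x]
    exact mul_nonneg hs (by linarith)

lemma L5g : ∀ x ∈ Set.Icc (0:ℝ) π, 0 ≤ 8*x - 10*Real.sin x*Real.cos x + 2*x*(Real.cos x)^2 - 2*x*(Real.sin x)^2 := by
  apply nonneg_aux (f' := fun x => 16*(Real.sin x)^2 - 8*x*Real.sin x*Real.cos x)
  · intro x
    have h := ((((hasDerivAt_id x).const_mul (8:ℝ)).sub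
        (((Real.hasDerivAt_sin x).mul (Real.hasDerivAt_cos x)).const_mul (10:ℝ))).add
        (((hasDerivAt_id x).mul ((Real.hasDerivAt_cos x).pow 2)).const_mul (2:ℝ))).sub
        (((hasDerivAt_id x).mul ((Real.hasDerivAt_sin x).pow 2)).const_mul (2:ℝ))
    simp only [id_eq] at h
    convert h using 1
    · rfl
    · rfl
    · funext y; simp only [Pi.sub_apply, Pi.add_apply, Pi.mul_apply, Pi.pow_apply, id_eq]; ring
    · simp only [Pi.pow_apply]
      push_cast
      linear_combination (8:ℝ) * Real.sin_sq_add_cos_sq x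
  · simp
  · intro x hx
    have hs := Real.sin_nonneg_of_nonneg_of_le_pi hx.1 hx.2
    nlinarith [mul_nonneg hs (L1 x hx), sq_nonneg (Real.sin x)]

lemma L5 : ∀ x ∈ Set.Icc (0:ℝ) π, 0 ≤ 4*x^2 + 2*x*Real.sin x*Real.cos x - 6*(Real.sin x)^2 := by
  apply nonneg_aux (f' := fun x => 8*x - 10*Real.sin x*Real.cos x + 2*x*(Real.cos x)^2 - 2*x*(Real.sin x)^2)
  · intro x
    have h := (((hasDerivAt_pow 2 x).const_mul (4:ℝ)).add
        ((((hasDerivAt_id x).mul (Real.hasDerivAt_sin x)).mul (Real.hasDerivAt_cos x)).const_mul (2:ℝ))).sub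
        (((Real.hasDerivAt_sin x).pow 2).const_mul (6:ℝ))
    simp only [id_eq] at h
    convert h using 1
    · rfl
    · rfl
    · funext y; simp only [Pi.sub_apply, Pi.add_apply, Pi.mul_apply, Pi.pow_apply, id_eq]; ring
    · simp only [Pi.mul_apply, id_eq]
      push_cast; ring
  · simp
  · exact L5g


-- p(ρ) = 1 - ρ cos ρ / sin ρ
lemma hasDerivAt_P (ρ : ℝ) (hs : Real.sin ρ ≠ 0) :
    HasDerivAt (fun u => 1 - u * Real.cos u / Real.sin u)
      ((ρ - Real.sin ρ * Real.cos ρ) / (Real.sin ρ)^2) ρ := by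
  have h1 : HasDerivAt (fun u : ℝ => u * Real.cos u) (Real.cos ρ - ρ * Real.sin ρ) ρ := by
    have := (hasDerivAt_id ρ).mul (Real.hasDerivAt_cos ρ)
    simp only [id_eq] at this
    refine this.congr_deriv (Eq.symm ?_); ring
  have h2 := h1.div (Real.hasDerivAt_sin ρ) hs
  have h3 := (hasDerivAt_const ρ (1:ℝ)).sub h2
  refine h3.congr_deriv (Eq.symm ?_)
  have p := Real.sin_sq_add_cos_sq ρ
  field_simp
  linear_combination (-ρ) * p

-- p'(ρ) = (ρ - sin ρ cos ρ)/sin²ρ, derivative p''(ρ) = 2(sin ρ - ρ cos ρ)/sin³ρ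
lemma hasDerivAt_P1 (ρ : ℝ) (hs : Real.sin ρ ≠ 0) :
    HasDerivAt (fun u => (u - Real.sin u * Real.cos u) / (Real.sin u)^2)
      (2*(Real.sin ρ - ρ * Real.cos ρ) / (Real.sin ρ)^3) ρ := by
  have h1 : HasDerivAt (fun u : ℝ => u - Real.sin u * Real.cos u)
      (1 - ((Real.cos ρ)^2 - (Real.sin ρ)^2)) ρ := by
    have := (hasDerivAt_id ρ).sub ((Real.hasDerivAt_sin ρ).mul (Real.hasDerivAt_cos ρ))
    refine this.congr_deriv (Eq.symm ?_); ring
  have h2 : HasDerivAt (fun u : ℝ => (Real.sin u)^2) (2 * Real.sin ρ * Real.cos ρ) ρ := by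
    have := (Real.hasDerivAt_sin ρ).pow 2
    refine this.congr_deriv (Eq.symm ?_); push_cast; ring
  have h3 := h1.div h2 (pow_ne_zero 2 hs)
  refine h3.congr_deriv (Eq.symm ?_)
  have p := Real.sin_sq_add_cos_sq ρ
  field_simp
  linear_combination (-Real.sin ρ) * p

-- q(ρ) = 1 - c²/ρ²
lemma hasDerivAt_Q (c ρ : ℝ) (hρ : ρ ≠ 0) :
    HasDerivAt (fun u => 1 - c^2 / u^2) (2*c^2/ρ^3) ρ := by
  have h1 := (hasDerivAt_const ρ (c^2)).div (hasDerivAt_pow 2 ρ) (pow_ne_zero 2 hρ)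
  have h2 := (hasDerivAt_const ρ (1:ℝ)).sub h1
  refine h2.congr_deriv (Eq.symm ?_)
  field_simp
  ring

-- q'(ρ) = 2c²/ρ³
lemma hasDerivAt_Q1 (c ρ : ℝ) (hρ : ρ ≠ 0) :
    HasDerivAt (fun u => 2*c^2/u^3) (-6*c^2/ρ^4) ρ := by
  have h1 := (hasDerivAt_const ρ (2*c^2)).div (hasDerivAt_pow 3 ρ) (pow_ne_zero 3 hρ)
  refine h1.congr_deriv (Eq.symm ?_)
  field_simp
  ring

-- r(s) = sqrt (α² + s²β²)
lemma hasDerivAt_R (α β s : ℝ) (hα : 0 < α) :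
    HasDerivAt (fun u : ℝ => Real.sqrt (α^2 + u^2*β^2))
      (s*β^2 / Real.sqrt (α^2 + s^2*β^2)) s := by
  have hx : (0:ℝ) < α^2 + s^2*β^2 := by positivity
  have hin : HasDerivAt (fun u : ℝ => α^2 + u^2*β^2) (2*s*β^2) s := by
    have := (hasDerivAt_const s (α^2)).add ((hasDerivAt_pow 2 s).mul_const (β^2))
    refine this.congr_deriv (Eq.symm ?_); push_cast; ring
  have h := (Real.hasDerivAt_sqrt hx.ne').comp s hin
  simp only [Function.comp_def] at h
  refine h.congr_deriv (Eq.symm ?_)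
  have hr : Real.sqrt (α^2+s^2*β^2) ≠ 0 := (Real.sqrt_pos.mpr hx).ne'
  field_simp

-- r'(s) = s β² / r(s)
lemma hasDerivAt_R1 (α β s : ℝ) (hα : 0 < α) :
    HasDerivAt (fun u : ℝ => u*β^2 / Real.sqrt (α^2 + u^2*β^2))
      (β^2 / Real.sqrt (α^2+s^2*β^2) - s^2*β^4/(Real.sqrt (α^2+s^2*β^2))^3) s := by
  have hx : (0:ℝ) < α^2 + s^2*β^2 := by positivity
  have hrpos : 0 < Real.sqrt (α^2+s^2*β^2) := Real.sqrt_pos.mpr hx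
  have hnum : HasDerivAt (fun u : ℝ => u*β^2) (β^2) s := by
    have := (hasDerivAt_id s).mul_const (β^2)
    simpa using this
  have h := hnum.div (hasDerivAt_R α β s hα) hrpos.ne'
  refine h.congr_deriv (Eq.symm ?_)
  have h2 : (Real.sqrt (α^2+s^2*β^2))^2 = α^2+s^2*β^2 := Real.sq_sqrt hx.le
  field_simp


lemma hasDerivAt_F (c α β : ℝ) (hα : 0 < α) (s : ℝ) (hs : Real.sqrt (α^2+s^2*β^2) < π) :
    HasDerivAt (fun u : ℝ =>
      (1 - Real.sqrt (α ^ 2 + u ^ 2 * β ^ 2) * Real.cos (Real.sqrt (α ^ 2 + u ^ 2 * β ^ 2)) /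
          Real.sin (Real.sqrt (α ^ 2 + u ^ 2 * β ^ 2))) *
        (1 - c ^ 2 / Real.sqrt (α ^ 2 + u ^ 2 * β ^ 2) ^ 2))
      ((((Real.sqrt (α^2+s^2*β^2)) - Real.sin (Real.sqrt (α^2+s^2*β^2)) * Real.cos (Real.sqrt (α^2+s^2*β^2))) /
          (Real.sin (Real.sqrt (α^2+s^2*β^2)))^2 * (1 - c^2/(Real.sqrt (α^2+s^2*β^2))^2)
        + (1 - (Real.sqrt (α^2+s^2*β^2)) * Real.cos (Real.sqrt (α^2+s^2*β^2)) / Real.sin (Real.sqrt (α^2+s^2*β^2))) *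
          (2*c^2/(Real.sqrt (α^2+s^2*β^2))^3)) * (s*β^2/(Real.sqrt (α^2+s^2*β^2)))) s := by
  have hx : (0:ℝ) < α^2 + s^2*β^2 := by positivity
  have hr : 0 < Real.sqrt (α^2+s^2*β^2) := Real.sqrt_pos.mpr hx
  have hsin : 0 < Real.sin (Real.sqrt (α^2+s^2*β^2)) := Real.sin_pos_of_pos_of_lt_pi hr hs
  have hP := (hasDerivAt_P _ hsin.ne').comp s (hasDerivAt_R α β s hα)
  have hQ := (hasDerivAt_Q c _ hr.ne').comp s (hasDerivAt_R α β s hα)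
  simp only [Function.comp_def] at hP hQ
  have h := hP.mul hQ
  refine h.congr_deriv (Eq.symm ?_)
  ring

lemma hasDerivAt_F1 (c α β : ℝ) (hα : 0 < α) (t : ℝ) (ht : Real.sqrt (α^2+t^2*β^2) < π) :
    HasDerivAt (fun u : ℝ =>
      (((Real.sqrt (α^2+u^2*β^2)) - Real.sin (Real.sqrt (α^2+u^2*β^2)) * Real.cos (Real.sqrt (α^2+u^2*β^2))) /
          (Real.sin (Real.sqrt (α^2+u^2*β^2)))^2 * (1 - c^2/(Real.sqrt (α^2+u^2*β^2))^2)
        + (1 - (Real.sqrt (α^2+u^2*β^2)) * Real.cos (Real.sqrt (α^2+u^2*β^2)) / Real.sin (Real.sqrt (α^2+u^2*β^2))) *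
          (2*c^2/(Real.sqrt (α^2+u^2*β^2))^3)) * (u*β^2/(Real.sqrt (α^2+u^2*β^2))))
      ((2*(Real.sin (Real.sqrt (α^2+t^2*β^2)) - (Real.sqrt (α^2+t^2*β^2)) * Real.cos (Real.sqrt (α^2+t^2*β^2))) /
          (Real.sin (Real.sqrt (α^2+t^2*β^2)))^3 * (1 - c^2/(Real.sqrt (α^2+t^2*β^2))^2)
        + 2*(((Real.sqrt (α^2+t^2*β^2)) - Real.sin (Real.sqrt (α^2+t^2*β^2)) * Real.cos (Real.sqrt (α^2+t^2*β^2))) /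
          (Real.sin (Real.sqrt (α^2+t^2*β^2)))^2) * (2*c^2/(Real.sqrt (α^2+t^2*β^2))^3)
        + (1 - (Real.sqrt (α^2+t^2*β^2)) * Real.cos (Real.sqrt (α^2+t^2*β^2)) / Real.sin (Real.sqrt (α^2+t^2*β^2))) *
          (-6*c^2/(Real.sqrt (α^2+t^2*β^2))^4)) * (t*β^2/(Real.sqrt (α^2+t^2*β^2)))^2
      + (((Real.sqrt (α^2+t^2*β^2)) - Real.sin (Real.sqrt (α^2+t^2*β^2)) * Real.cos (Real.sqrt (α^2+t^2*β^2))) /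
          (Real.sin (Real.sqrt (α^2+t^2*β^2)))^2 * (1 - c^2/(Real.sqrt (α^2+t^2*β^2))^2)
        + (1 - (Real.sqrt (α^2+t^2*β^2)) * Real.cos (Real.sqrt (α^2+t^2*β^2)) / Real.sin (Real.sqrt (α^2+t^2*β^2))) *
          (2*c^2/(Real.sqrt (α^2+t^2*β^2))^3)) *
        (β^2/(Real.sqrt (α^2+t^2*β^2)) - t^2*β^4/(Real.sqrt (α^2+t^2*β^2))^3)) t := by
  have hx : (0:ℝ) < α^2 + t^2*β^2 := by positivity
  have hr : 0 < Real.sqrt (α^2+t^2*β^2) := Real.sqrt_pos.mpr hx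
  have hsin : 0 < Real.sin (Real.sqrt (α^2+t^2*β^2)) := Real.sin_pos_of_pos_of_lt_pi hr ht
  have hP := (hasDerivAt_P _ hsin.ne').comp t (hasDerivAt_R α β t hα)
  have hP1 := (hasDerivAt_P1 _ hsin.ne').comp t (hasDerivAt_R α β t hα)
  have hQ := (hasDerivAt_Q c _ hr.ne').comp t (hasDerivAt_R α β t hα)
  have hQ1 := (hasDerivAt_Q1 c _ hr.ne').comp t (hasDerivAt_R α β t hα)
  simp only [Function.comp_def] at hP hP1 hQ hQ1
  have h := ((hP1.mul hQ).add (hP.mul hQ1)).mul (hasDerivAt_R1 α β t hα)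
  refine h.congr_deriv (Eq.symm ?_)
  simp only [Pi.add_apply, Pi.mul_apply]
  ring


lemma alg (P P1 P2 r w m : ℝ) (hr : 0 < r) (hm : 0 ≤ m) (hmw : m ≤ w) (hw : w ≤ 1)
    (h2 : 2/3 ≤ P2) (h3 : 2/3*r ≤ P1) (h4 : r^2/3 ≤ P) (h5 : 0 ≤ 4*P1/r - 6*P/r^2) :
    1/2 ≤ (P2*(1-m) + 2*P1*(2*m/r) + P*(-6*m/r^2))*(1-w)
        + (P1*(1-m) + P*(2*m/r))*(w/r) := by
  have hm1 : m ≤ 1 := hmw.trans hw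
  have hw0 : 0 ≤ w := hm.trans hmw
  have e3 : 2/3 ≤ P1/r := by rw [le_div_iff₀ hr]; linarith
  have e4 : 1/3 ≤ P/r^2 := by rw [le_div_iff₀ (by positivity : (0:ℝ) < r^2)]; linarith
  have key : (P2*(1-m) + 2*P1*(2*m/r) + P*(-6*m/r^2))*(1-w)
        + (P1*(1-m) + P*(2*m/r))*(w/r)
      = P2*((1-m)*(1-w)) + (4*P1/r - 6*P/r^2)*(m*(1-w))
        + (P1/r)*((1-m)*w) + 2*(P/r^2)*(m*w) := by
    field_simp
    ring
  rw [key]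
  have hA : 2/3*((1-m)*(1-w)) ≤ P2*((1-m)*(1-w)) :=
    mul_le_mul_of_nonneg_right h2 (by nlinarith)
  have hB : 0 ≤ (4*P1/r - 6*P/r^2)*(m*(1-w)) :=
    mul_nonneg h5 (by nlinarith)
  have hC : 2/3*((1-m)*w) ≤ (P1/r)*((1-m)*w) :=
    mul_le_mul_of_nonneg_right e3 (by nlinarith)
  have hD : 1/3*(m*w) ≤ (P/r^2)*(m*w) :=
    mul_le_mul_of_nonneg_right e4 (mul_nonneg hm hw0)
  nlinarith [mul_le_mul_of_nonneg_left hmw hm, sq_nonneg (m - 1/2)]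

theorem stmt7 :
    ∃ C₀ : ℝ, 0 < C₀ ∧
      ∀ (c α β : ℝ), 0 < α → 0 < β → |c| ≤ α →
        ∀ t : ℝ, Real.sqrt (α ^ 2 + t ^ 2 * β ^ 2) ∈ Set.Ioo 0 π →
          deriv (deriv (fun s : ℝ =>
            (1 - Real.sqrt (α ^ 2 + s ^ 2 * β ^ 2) *
                Real.cos (Real.sqrt (α ^ 2 + s ^ 2 * β ^ 2)) /
                Real.sin (Real.sqrt (α ^ 2 + s ^ 2 * β ^ 2))) *
              (1 - c ^ 2 / Real.sqrt (α ^ 2 + s ^ 2 * β ^ 2) ^ 2))) t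
            ≥ C₀ * β ^ 2 := by
  refine ⟨1/2, by norm_num, ?_⟩
  intro c α β hα hβ hc t ht
  obtain ⟨ht0, htπ⟩ := ht
  have hx : (0:ℝ) < α^2 + t^2*β^2 := by positivity
  have hr0 : 0 < Real.sqrt (α^2+t^2*β^2) := Real.sqrt_pos.mpr hx
  have hr2 : (Real.sqrt (α^2+t^2*β^2))^2 = α^2+t^2*β^2 := Real.sq_sqrt hx.le
  have hsin : 0 < Real.sin (Real.sqrt (α^2+t^2*β^2)) :=
    Real.sin_pos_of_pos_of_lt_pi hr0 htπ
  -- Step 1: identify deriv (deriv F) t with the explicit second derivative.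
  have hU : IsOpen {s : ℝ | α^2 + s^2*β^2 < π^2} :=
    isOpen_lt (by continuity) continuous_const
  have htU : t ∈ {s : ℝ | α^2 + s^2*β^2 < π^2} := by
    have : Real.sqrt (α^2+t^2*β^2) < π := htπ
    simp only [Set.mem_setOf_eq]
    nlinarith [hr2, hr0]
  have hev : deriv (fun s : ℝ =>
            (1 - Real.sqrt (α ^ 2 + s ^ 2 * β ^ 2) *
                Real.cos (Real.sqrt (α ^ 2 + s ^ 2 * β ^ 2)) /
                Real.sin (Real.sqrt (α ^ 2 + s ^ 2 * β ^ 2))) *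
              (1 - c ^ 2 / Real.sqrt (α ^ 2 + s ^ 2 * β ^ 2) ^ 2))
      =ᶠ[nhds t] (fun u : ℝ =>
      (((Real.sqrt (α^2+u^2*β^2)) - Real.sin (Real.sqrt (α^2+u^2*β^2)) * Real.cos (Real.sqrt (α^2+u^2*β^2))) /
          (Real.sin (Real.sqrt (α^2+u^2*β^2)))^2 * (1 - c^2/(Real.sqrt (α^2+u^2*β^2))^2)
        + (1 - (Real.sqrt (α^2+u^2*β^2)) * Real.cos (Real.sqrt (α^2+u^2*β^2)) / Real.sin (Real.sqrt (α^2+u^2*β^2))) *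
          (2*c^2/(Real.sqrt (α^2+u^2*β^2))^3)) * (u*β^2/(Real.sqrt (α^2+u^2*β^2)))) := by
    filter_upwards [hU.mem_nhds htU] with s hs
    have hsπ : Real.sqrt (α^2+s^2*β^2) < π := by
      have h1 : Real.sqrt (α^2+s^2*β^2) < Real.sqrt (π^2) :=
        Real.sqrt_lt_sqrt (by positivity) hs
      rwa [Real.sqrt_sq Real.pi_pos.le] at h1
    exact (hasDerivAt_F c α β hα s hsπ).deriv
  rw [hev.deriv_eq, (hasDerivAt_F1 c α β hα t htπ).deriv]
  -- Step 2: the inequality.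
  set r := Real.sqrt (α^2+t^2*β^2) with hrdef
  have hc2 : c^2 ≤ α^2 := by
    have := sq_abs c
    nlinarith [abs_nonneg c]
  have hα2r : α^2 ≤ r^2 := by nlinarith
  have hIcc : r ∈ Set.Icc (0:ℝ) π := ⟨hr0.le, htπ.le⟩
  have h2 : 2/3 ≤ 2*(Real.sin r - r*Real.cos r)/(Real.sin r)^3 := by
    rw [le_div_iff₀ (by positivity)]
    nlinarith [L4 r hIcc]
  have h3 : 2/3*r ≤ (r - Real.sin r*Real.cos r)/(Real.sin r)^2 := by
    rw [le_div_iff₀ (by positivity)]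
    nlinarith [L2 r hIcc]
  have h4 : r^2/3 ≤ 1 - r*Real.cos r/Real.sin r := by
    have he : 1 - r*Real.cos r/Real.sin r = (Real.sin r - r*Real.cos r)/Real.sin r := by
      field_simp
    rw [he, le_div_iff₀ hsin]
    nlinarith [L3 r hIcc]
  have h5 : 0 ≤ 4*((r - Real.sin r*Real.cos r)/(Real.sin r)^2)/r
      - 6*(1 - r*Real.cos r/Real.sin r)/r^2 := by
    have he : 4*((r - Real.sin r*Real.cos r)/(Real.sin r)^2)/r
        - 6*(1 - r*Real.cos r/Real.sin r)/r^2
        = (4*r^2 + 2*r*Real.sin r*Real.cos r - 6*(Real.sin r)^2)/(r^2*(Real.sin r)^2) := by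
      field_simp
      ring
    rw [he]
    exact div_nonneg (L5 r hIcc) (by positivity)
  have hmw : c^2/r^2 ≤ α^2/r^2 := by gcongr
  have hw : α^2/r^2 ≤ 1 := by
    rw [div_le_one (by positivity)]; exact hα2r
  have key := alg (1 - r*Real.cos r/Real.sin r) ((r - Real.sin r*Real.cos r)/(Real.sin r)^2)
    (2*(Real.sin r - r*Real.cos r)/(Real.sin r)^3) r (α^2/r^2) (c^2/r^2)
    hr0 (by positivity) hmw hw h2 h3 h4 h5
  rw [ge_iff_le]
  have hα2 : α^2 = r^2 - t^2*β^2 := by linarith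
  refine le_trans (le_of_eq (by ring : (1:ℝ)/2*β^2 = β^2*(1/2)))
    (le_trans (mul_le_mul_of_nonneg_left key (sq_nonneg β)) (le_of_eq ?_))
  rw [hα2]
  field_simp
  ring
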